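/- arXiv:1906.11809 — 2 statements merged into one kernel-verified Lean document; each statement's English description precedes it below -/
import Mathlib

section
/- Consider the iterates of the iterative adaptive sketching algorithm: x̃^{(0)} = 0, and for t ≥ 1, x̃^{(t)} = −λ⁻¹Aᵀ∇f(ASα^{(t)} + Ax̃^{(t−1)}) where α^{(t)} minimizes α ↦ f(ASα + Ax̃^{(t−1)}) + (λ/2)‖Sα + x̃^{(t−1)}‖₂². If λ ≥ 2μZ_f², then after T iterations, ‖x̃^{(T)} − x*‖₂ ≤ (μZ_f²/(2λ))^{T/2} · ‖x*‖₂. -/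
open Matrix Finset Real Set

noncomputable section

namespace Sketch

/-- The ℓ2 norm of a vector in `Fin k → ℝ`. -/
def norm2 {k : ℕ} (x : Fin k → ℝ) : ℝ := Real.sqrt (∑ i, x i ^ 2)

/-- The continuous linear functional `v ↦ ⟨w, v⟩`; used to state that a function has
gradient `w` at a point. -/
def dotCLM {k : ℕ} (w : Fin k → ℝ) : (Fin k → ℝ) →L[ℝ] ℝ :=
  LinearMap.toContinuousLinearMap
    { toFun := fun v => w ⬝ᵥ v
      map_add' := fun a b => dotProduct_add w a b
      map_smul' := fun c a => by
        simp [dotProduct, Finset.mul_sum, mul_left_comm] }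

/-- The domain of the Fenchel conjugate `f*`. -/
def fenchelDom {k : ℕ} (f : (Fin k → ℝ) → ℝ) : Set (Fin k → ℝ) :=
  {z | BddAbove (Set.range fun w => w ⬝ᵥ z - f w)}

/-- The Fenchel conjugate `f*(z) = sup_w (⟨w, z⟩ - f(w))` (as a real-valued supremum,
meaningful on `fenchelDom f`). -/
def fenchel {k : ℕ} (f : (Fin k → ℝ) → ℝ) (z : Fin k → ℝ) : ℝ :=
  ⨆ w, (w ⬝ᵥ z - f w)

/-- The subdifferential of the Fenchel conjugate `f*` at `z`. -/
def fenchelSubdiff {k : ℕ} (f : (Fin k → ℝ) → ℝ) (z : Fin k → ℝ) : Set (Fin k → ℝ) :=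
  {g | ∀ y ∈ fenchelDom f, fenchel f z + g ⬝ᵥ (y - z) ≤ fenchel f y}

/-- `P` is the orthogonal projector onto the range (column space) of `S`. -/
def IsOrthProj {q m : ℕ} (S : Matrix (Fin q) (Fin m) ℝ) (P : Matrix (Fin q) (Fin q) ℝ) : Prop :=
  Pᵀ = P ∧ P * P = P ∧ P * S = S ∧ ∃ C : Matrix (Fin m) (Fin q) ℝ, P = S * C

/-- The quantity `Z_f`: the supremum of `(Δᵀ B P⊥ Bᵀ Δ)^{1/2} / ‖Δ‖₂` over nonzero
`Δ ∈ dom f* - z*`. -/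
def Zf {k q : ℕ} (f : (Fin k → ℝ) → ℝ) (B : Matrix (Fin k) (Fin q) ℝ)
    (Pperp : Matrix (Fin q) (Fin q) ℝ) (zs : Fin k → ℝ) : ℝ :=
  sSup {r | ∃ Δ : Fin k → ℝ, Δ ≠ 0 ∧ zs + Δ ∈ fenchelDom f ∧
    r = Real.sqrt (Δ ⬝ᵥ (B * Pperp * Bᵀ).mulVec Δ) / norm2 Δ}

/-- The spectral norm (largest singular value) of a matrix. -/
def specNorm {a b : ℕ} (M : Matrix (Fin a) (Fin b) ℝ) : ℝ :=
  sSup {r | ∃ v : Fin b → ℝ, norm2 v = 1 ∧ r = norm2 (M.mulVec v)}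

/-- The eigenvalues of `A * Aᵀ` (i.e. the squared singular values of `A`),
sorted in decreasing order. -/
def eigsDesc {n d : ℕ} (A : Matrix (Fin n) (Fin d) ℝ) : Fin n → ℝ := fun i =>
  ((Matrix.isHermitian_mul_conjTranspose_self A).eigenvalues ∘
    Tuple.sort (Matrix.isHermitian_mul_conjTranspose_self A).eigenvalues) i.rev

/-- The spectral tail `R_k(A) = (σ_k² + (1/k) ∑_{j=k+1}^ρ σ_j²)^{1/2}`. -/
def Rk {n d : ℕ} (A : Matrix (Fin n) (Fin d) ℝ) (k : ℕ) : ℝ :=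
  Real.sqrt ((∑ j : Fin n, if (j : ℕ) + 1 = k then eigsDesc A j else 0)
    + (1 / (k : ℝ)) * ∑ j : Fin n, if k ≤ (j : ℕ) then eigsDesc A j else 0)

/-- Product measure on `n × m` matrices with i.i.d. standard Gaussian entries. -/
def gaussMatrix (n m : ℕ) : MeasureTheory.Measure (Fin n → Fin m → ℝ) :=
  MeasureTheory.Measure.pi fun _ => MeasureTheory.Measure.pi fun _ =>
    ProbabilityTheory.gaussianReal 0 1


/-- The largest eigenvalue (Rayleigh quotient supremum) of a symmetric matrix. -/
def eigMax {q : ℕ} (M : Matrix (Fin q) (Fin q) ℝ) : ℝ :=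
  sSup {r | ∃ v : Fin q → ℝ, norm2 v = 1 ∧ r = v ⬝ᵥ M.mulVec v}

/-- The smallest eigenvalue (Rayleigh quotient infimum) of a symmetric matrix. -/
def eigMin {q : ℕ} (M : Matrix (Fin q) (Fin q) ℝ) : ℝ :=
  sInf {r | ∃ v : Fin q → ℝ, norm2 v = 1 ∧ r = v ⬝ᵥ M.mulVec v}


section Helpers
variable {k l : ℕ}

lemma dotCLM_apply (w v : Fin k → ℝ) : dotCLM w v = w ⬝ᵥ v := rfl

lemma dot_self_nonneg (v : Fin k → ℝ) : 0 ≤ v ⬝ᵥ v :=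
  Finset.sum_nonneg fun i _ => mul_self_nonneg _

lemma norm2_sq (v : Fin k → ℝ) : norm2 v ^ 2 = v ⬝ᵥ v := by
  rw [norm2, Real.sq_sqrt (Finset.sum_nonneg fun i _ => sq_nonneg _)]
  simp [dotProduct, sq]

lemma norm2_nonneg (v : Fin k → ℝ) : 0 ≤ norm2 v := Real.sqrt_nonneg _

lemma norm2_eq_sqrt_dot (v : Fin k → ℝ) : norm2 v = Real.sqrt (v ⬝ᵥ v) := by
  rw [norm2]; congr 1; simp [dotProduct, sq]

lemma dot_self_eq_zero {v : Fin k → ℝ} (h : v ⬝ᵥ v = 0) : v = 0 := by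
  funext i
  have := (Finset.sum_eq_zero_iff_of_nonneg (fun i _ => mul_self_nonneg (v i))).1 h i (Finset.mem_univ i)
  simpa [mul_self_eq_zero] using this

lemma norm2_pos {v : Fin k → ℝ} (h : v ≠ 0) : 0 < norm2 v := by
  rcases lt_or_eq_of_le (norm2_nonneg v) with h1 | h1
  · exact h1
  · exfalso; apply h
    apply dot_self_eq_zero
    rw [← norm2_sq, ← h1]; ring

lemma cauchy_dot (u v : Fin k → ℝ) : u ⬝ᵥ v ≤ norm2 u * norm2 v := by
  have h := sum_mul_sq_le_sq_mul_sq Finset.univ u v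
  have h2 : u ⬝ᵥ v ≤ |u ⬝ᵥ v| := le_abs_self _
  refine h2.trans ?_
  rw [← Real.sqrt_sq_eq_abs, norm2, norm2, ← Real.sqrt_mul (Finset.sum_nonneg fun i _ => sq_nonneg _)]
  exact Real.sqrt_le_sqrt (by simpa [dotProduct] using h)

lemma norm2_smul (t : ℝ) (v : Fin k → ℝ) : norm2 (t • v) = |t| * norm2 v := by
  rw [norm2, norm2, ← Real.sqrt_sq_eq_abs, ← Real.sqrt_mul (sq_nonneg t), Finset.mul_sum]
  congr 1; apply Finset.sum_congr rfl; intro i _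
  simp [Pi.smul_apply, smul_eq_mul]; ring

lemma norm2_neg (v : Fin k → ℝ) : norm2 (-v) = norm2 v := by
  rw [norm2, norm2]; congr 1; apply Finset.sum_congr rfl; intro i _; simp


/-- CLM given by mulVec. -/
def mulVecCLM (M : Matrix (Fin l) (Fin k) ℝ) : (Fin k → ℝ) →L[ℝ] (Fin l → ℝ) :=
  LinearMap.toContinuousLinearMap M.mulVecLin

lemma mulVecCLM_apply (M : Matrix (Fin l) (Fin k) ℝ) (v : Fin k → ℝ) :
    mulVecCLM M v = M.mulVec v := rfl

lemma hasFDerivAt_mulVec (M : Matrix (Fin l) (Fin k) ℝ) (c : Fin l → ℝ) (p : Fin k → ℝ) :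
    HasFDerivAt (fun x => M.mulVec x + c) (mulVecCLM M) p := by
  have : HasFDerivAt (fun x : Fin k → ℝ => M.mulVec x) (mulVecCLM M) p :=
    (mulVecCLM M).hasFDerivAt
  simpa using this.add_const c

lemma hasFDerivAt_dotSelf (p : Fin k → ℝ) :
    HasFDerivAt (fun x : Fin k → ℝ => x ⬝ᵥ x) (dotCLM ((2:ℝ) • p)) p := by
  have h : ∀ i : Fin k, HasFDerivAt (fun x : Fin k → ℝ => x i * x i)
      ((p i • (ContinuousLinearMap.proj i : (Fin k → ℝ) →L[ℝ] ℝ))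
        + (p i • (ContinuousLinearMap.proj i : (Fin k → ℝ) →L[ℝ] ℝ))) p := by
    intro i
    have hp : HasFDerivAt (fun x : Fin k → ℝ => x i)
        (ContinuousLinearMap.proj i : (Fin k → ℝ) →L[ℝ] ℝ) p :=
      (ContinuousLinearMap.proj i : (Fin k → ℝ) →L[ℝ] ℝ).hasFDerivAt
    exact hp.mul hp
  have hsum := HasFDerivAt.sum (fun i (_ : i ∈ Finset.univ) => h i)
  have heq : (∑ i : Fin k, ((p i • (ContinuousLinearMap.proj i : (Fin k → ℝ) →L[ℝ] ℝ))
        + (p i • (ContinuousLinearMap.proj i : (Fin k → ℝ) →L[ℝ] ℝ))))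
      = dotCLM ((2:ℝ) • p) := by
    apply ContinuousLinearMap.ext; intro v
    simp [dotCLM, dotProduct, ContinuousLinearMap.sum_apply, Finset.sum_add_distrib,
      LinearMap.toContinuousLinearMap]
    rw [← Finset.sum_add_distrib]
    apply Finset.sum_congr rfl; intro i _; ring
  rw [heq] at hsum
  have : (fun x : Fin k → ℝ => x ⬝ᵥ x) = fun y => ∑ i : Fin k, y i * y i := by
    funext y; simp [dotProduct]
  have hfun : (∑ i : Fin k, fun x : Fin k → ℝ => x i * x i) = fun y => ∑ i : Fin k, y i * y i := by
    funext y; rw [Finset.sum_apply]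
  rw [this, ← hfun]; exact hsum


lemma transpose_dot (M : Matrix (Fin l) (Fin k) ℝ) (z : Fin l → ℝ) (v : Fin k → ℝ) :
    z ⬝ᵥ M.mulVec v = Mᵀ.mulVec z ⬝ᵥ v := by
  rw [Matrix.dotProduct_mulVec, Matrix.mulVec_transpose]

lemma dot_self_eq_zero' {v : Fin k → ℝ} (h : v ⬝ᵥ v = 0) : v = 0 := by
  funext i
  have := (Finset.sum_eq_zero_iff_of_nonneg (fun i _ => mul_self_nonneg (v i))).1 h i (Finset.mem_univ i)
  simpa [mul_self_eq_zero] using this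

lemma first_order {nn : ℕ} (f : (Fin nn → ℝ) → ℝ) (f' : (Fin nn → ℝ) → Fin nn → ℝ)
    (hdiff : ∀ w, HasFDerivAt f (dotCLM (f' w)) w) (lam : ℝ)
    (M : Matrix (Fin nn) (Fin k) ℝ) (N : Matrix (Fin l) (Fin k) ℝ)
    (c : Fin nn → ℝ) (c' : Fin l → ℝ) (p : Fin k → ℝ)
    (hmin : ∀ x, f (M.mulVec p + c) + lam / 2 * ((N.mulVec p + c') ⬝ᵥ (N.mulVec p + c'))
      ≤ f (M.mulVec x + c) + lam / 2 * ((N.mulVec x + c') ⬝ᵥ (N.mulVec x + c'))) :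
    Mᵀ.mulVec (f' (M.mulVec p + c)) + lam • Nᵀ.mulVec (N.mulVec p + c') = 0 := by
  set F : (Fin k → ℝ) → ℝ := fun x =>
    f (M.mulVec x + c) + lam / 2 * ((N.mulVec x + c') ⬝ᵥ (N.mulVec x + c'))
  have h1 : HasFDerivAt (fun x => f (M.mulVec x + c))
      ((dotCLM (f' (M.mulVec p + c))).comp (mulVecCLM M)) p :=
    (hdiff _).comp p (hasFDerivAt_mulVec M c p)
  have h2 : HasFDerivAt (fun x : Fin k → ℝ => (N.mulVec x + c') ⬝ᵥ (N.mulVec x + c'))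
      ((dotCLM ((2:ℝ) • (N.mulVec p + c'))).comp (mulVecCLM N)) p :=
    (hasFDerivAt_dotSelf (N.mulVec p + c')).comp (g := fun x : Fin l → ℝ => x ⬝ᵥ x) p (hasFDerivAt_mulVec N c' p)
  have hF : HasFDerivAt F
      ((dotCLM (f' (M.mulVec p + c))).comp (mulVecCLM M)
        + (lam / 2) • ((dotCLM ((2:ℝ) • (N.mulVec p + c'))).comp (mulVecCLM N))) p :=
    h1.add (h2.const_mul (lam / 2))
  have hloc : IsLocalMin F p := Filter.Eventually.of_forall hmin
  have hz := hloc.hasFDerivAt_eq_zero hF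
  have hv : ∀ v : Fin k → ℝ,
      (Mᵀ.mulVec (f' (M.mulVec p + c)) + lam • Nᵀ.mulVec (N.mulVec p + c')) ⬝ᵥ v = 0 := by
    intro v
    have hthis := congrFun (congrArg DFunLike.coe hz) v
    have h0 : f' (M.mulVec p + c) ⬝ᵥ M.mulVec v
        + lam / 2 * ((((2:ℝ) • (N.mulVec p + c')) : Fin l → ℝ) ⬝ᵥ N.mulVec v) = 0 := by
      have e1 := dotCLM_apply (f' (M.mulVec p + c)) (M.mulVec v)
      have e2 := dotCLM_apply (((2:ℝ) • (N.mulVec p + c')) : Fin l → ℝ) (N.mulVec v)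
      simp only [ContinuousLinearMap.add_apply, ContinuousLinearMap.comp_apply,
        ContinuousLinearMap.smul_apply, mulVecCLM_apply, smul_eq_mul,
        ContinuousLinearMap.zero_apply, dotCLM_apply] at hthis
      linarith [hthis]
    have h2 : (((2:ℝ) • (N.mulVec p + c')) : Fin l → ℝ) ⬝ᵥ N.mulVec v
        = 2 * ((N.mulVec p + c') ⬝ᵥ N.mulVec v) := smul_dotProduct 2 _ _
    rw [add_dotProduct, smul_dotProduct, ← transpose_dot M, ← transpose_dot N,
      smul_eq_mul]
    rw [h2] at h0
    linarith
  exact dot_self_eq_zero' (hv _)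


section Analytic
variable {nn : ℕ} (f : (Fin nn → ℝ) → ℝ) (f' : (Fin nn → ℝ) → Fin nn → ℝ)

lemma hasDerivAt_path (hdiff : ∀ w, HasFDerivAt f (dotCLM (f' w)) w)
    (x d : Fin nn → ℝ) (t : ℝ) :
    HasDerivAt (fun s : ℝ => f (x + s • d)) (f' (x + t • d) ⬝ᵥ d) t := by
  have hp : HasDerivAt (fun s : ℝ => x + s • d) d t := by
    simpa using ((hasDerivAt_id t).smul_const d).const_add x
  have := (hdiff (x + t • d)).comp_hasDerivAt t hp
  simpa [dotCLM_apply, Function.comp_def] using this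

lemma grad_ineq (hconv : ConvexOn ℝ Set.univ f)
    (hdiff : ∀ w, HasFDerivAt f (dotCLM (f' w)) w) (x u : Fin nn → ℝ) :
    f x + f' x ⬝ᵥ (u - x) ≤ f u := by
  set d := u - x with hd
  set g : ℝ → ℝ := fun s => f (x + s • d) with hg
  have hconvg : ConvexOn ℝ Set.univ g := by
    have hcomp := hconv.comp_affineMap (AffineMap.lineMap x u : ℝ →ᵃ[ℝ] (Fin nn → ℝ))
    have hgeq : g = f ∘ (AffineMap.lineMap x u : ℝ →ᵃ[ℝ] (Fin nn → ℝ)) := by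
      funext s
      simp [hg, AffineMap.lineMap_apply, hd, add_comm]
    rw [hgeq]
    simpa using hcomp
  have hder : HasDerivAt g (f' x ⬝ᵥ d) 0 := by
    have := hasDerivAt_path f f' hdiff x d 0
    simpa using this
  have hs := hconvg.le_slope_of_hasDerivAt (Set.mem_univ (0:ℝ)) (Set.mem_univ (1:ℝ))
    one_pos hder
  have hslope : slope g 0 1 = g 1 - g 0 := by simp [slope_def_field]
  rw [hslope] at hs
  have hg1 : g 1 = f u := by simp [hg, hd]
  have hg0 : g 0 = f x := by simp [hg]
  rw [hg1, hg0] at hs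
  linarith

lemma descent {μ : ℝ}
    (hdiff : ∀ w, HasFDerivAt f (dotCLM (f' w)) w)
    (hsmooth : ∀ w v, norm2 (f' w - f' v) ≤ μ * norm2 (w - v))
    (x d : Fin nn → ℝ) :
    f (x + d) ≤ f x + f' x ⬝ᵥ d + μ / 2 * (d ⬝ᵥ d) := by
  set K := f' x ⬝ᵥ d with hK
  set C := d ⬝ᵥ d with hC
  set h : ℝ → ℝ := fun t => f (x + t • d) - t * K - μ / 2 * C * t ^ 2 with hh
  have hD : ∀ t : ℝ, HasDerivAt h
      (f' (x + t • d) ⬝ᵥ d - K - μ / 2 * C * (2 * t)) t := by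
    intro t
    have h1 := hasDerivAt_path f f' hdiff x d t
    have h2 : HasDerivAt (fun s : ℝ => s * K) K t := hasDerivAt_mul_const K
    have h3 : HasDerivAt (fun s : ℝ => μ / 2 * C * s ^ 2) (μ / 2 * C * (2 * t)) t := by
      have := (hasDerivAt_pow 2 t).const_mul (μ / 2 * C)
      simpa [mul_comm] using this
    exact (h1.sub h2).sub h3
  have hderiv_nonpos : ∀ t : ℝ, 0 ≤ t → deriv h t ≤ 0 := by
    intro t ht
    rw [(hD t).deriv]
    have hcs : (f' (x + t • d) - f' x) ⬝ᵥ d ≤ norm2 (f' (x + t • d) - f' x) * norm2 d :=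
      cauchy_dot _ _
    have hl : norm2 (f' (x + t • d) - f' x) ≤ μ * (t * norm2 d) := by
      have := hsmooth (x + t • d) x
      have he : x + t • d - x = t • d := by abel
      rw [he, norm2_smul, abs_of_nonneg ht] at this
      linarith [this]
    have hnd : norm2 d * norm2 d = C := by rw [hC, ← norm2_sq]; ring
    have hsub : (f' (x + t • d) - f' x) ⬝ᵥ d = f' (x + t • d) ⬝ᵥ d - K := by
      rw [sub_dotProduct, hK]
    have h4 : norm2 (f' (x + t • d) - f' x) * norm2 d ≤ μ * (t * norm2 d) * norm2 d :=
      mul_le_mul_of_nonneg_right hl (norm2_nonneg d)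
    have h5 : μ * (t * norm2 d) * norm2 d = μ / 2 * C * (2 * t) := by rw [← hnd]; ring
    linarith
  have hanti : AntitoneOn h (Set.Icc (0:ℝ) 1) := by
    apply antitoneOn_of_deriv_nonpos (convex_Icc 0 1)
    · exact fun t _ => ((hD t).differentiableAt).continuousAt.continuousWithinAt
    · exact fun t _ => ((hD t).differentiableAt).differentiableWithinAt
    · intro t ht
      rw [interior_Icc] at ht
      exact hderiv_nonpos t ht.1.le
  have h10 : h 1 ≤ h 0 := hanti (Set.mem_Icc.2 ⟨le_refl 0, zero_le_one⟩)
    (Set.mem_Icc.2 ⟨zero_le_one, le_refl 1⟩) zero_le_one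
  simp only [hh, one_smul, one_pow, mul_one, zero_smul, add_zero, zero_mul, sub_zero,
    ne_eq, OfNat.ofNat_ne_zero, not_false_eq_true, zero_pow, mul_zero] at h10
  linarith

lemma dotCLM_sub (a b : Fin nn → ℝ) : dotCLM (a - b) = dotCLM a - dotCLM b := by
  apply ContinuousLinearMap.ext; intro v
  simp [dotCLM_apply, sub_dotProduct]

lemma coco_half {μ : ℝ} (hμ : 0 < μ) (hconv : ConvexOn ℝ Set.univ f)
    (hdiff : ∀ w, HasFDerivAt f (dotCLM (f' w)) w)
    (hsmooth : ∀ w v, norm2 (f' w - f' v) ≤ μ * norm2 (w - v))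
    (v w : Fin nn → ℝ) :
    f v - f' v ⬝ᵥ v ≤ f w - f' v ⬝ᵥ w
      - 1 / (2 * μ) * ((f' w - f' v) ⬝ᵥ (f' w - f' v)) := by
  set φ : (Fin nn → ℝ) → ℝ := fun u => f u - f' v ⬝ᵥ u with hφ
  set φ' : (Fin nn → ℝ) → (Fin nn → ℝ) := fun u => f' u - f' v with hφ'
  have hφdiff : ∀ u, HasFDerivAt φ (dotCLM (φ' u)) u := by
    intro u
    have := (hdiff u).sub (dotCLM (f' v)).hasFDerivAt
    rw [hφ', dotCLM_sub]
    exact this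
  have hφconv : ConvexOn ℝ Set.univ φ := by
    refine ⟨convex_univ, fun a _ b _ s t hs ht hst => ?_⟩
    have h1 := hconv.2 (Set.mem_univ a) (Set.mem_univ b) hs ht hst
    have h2 : f' v ⬝ᵥ (s • a + t • b) = s * (f' v ⬝ᵥ a) + t * (f' v ⬝ᵥ b) := by
      rw [dotProduct_add, dotProduct_smul, dotProduct_smul]
      simp
    simp only [hφ, smul_eq_mul] at *
    linarith
  have hφsmooth : ∀ a b, norm2 (φ' a - φ' b) ≤ μ * norm2 (a - b) := by
    intro a b
    have : φ' a - φ' b = f' a - f' b := by rw [hφ']; exact sub_sub_sub_cancel_right _ _ _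
    rw [this]; exact hsmooth a b
  set g : Fin nn → ℝ := f' w - f' v with hgdef
  set G : ℝ := g ⬝ᵥ g with hG
  have step1 : φ v ≤ φ (w + (-μ⁻¹) • g) := by
    have := grad_ineq φ φ' hφconv hφdiff v (w + (-μ⁻¹) • g)
    have hz : φ' v = 0 := by rw [hφ']; simp
    rw [hz, zero_dotProduct] at this
    linarith
  have step2 : φ (w + (-μ⁻¹) • g) ≤ φ w + φ' w ⬝ᵥ ((-μ⁻¹) • g)
      + μ / 2 * (((-μ⁻¹) • g) ⬝ᵥ ((-μ⁻¹) • g)) :=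
    descent φ φ' hφdiff hφsmooth w ((-μ⁻¹) • g)
  have e1 : φ' w ⬝ᵥ ((-μ⁻¹) • g) = -μ⁻¹ * G := by
    have hw : φ' w = g := rfl
    rw [hw, dotProduct_smul, hG]; simp
  have e2 : ((-μ⁻¹) • g) ⬝ᵥ ((-μ⁻¹) • g) = μ⁻¹ * μ⁻¹ * G := by
    rw [smul_dotProduct, dotProduct_smul, hG]; simp; ring
  have key : φ v ≤ φ w - 1 / (2 * μ) * G := by
    have hc : -μ⁻¹ * G + μ / 2 * (μ⁻¹ * μ⁻¹ * G) = -(1 / (2 * μ) * G) := by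
      field_simp
      ring
    calc φ v ≤ φ w + φ' w ⬝ᵥ ((-μ⁻¹) • g) + μ / 2 * (((-μ⁻¹) • g) ⬝ᵥ ((-μ⁻¹) • g)) :=
          step1.trans step2
      _ = φ w + (-μ⁻¹ * G + μ / 2 * (μ⁻¹ * μ⁻¹ * G)) := by rw [e1, e2]; ring
      _ = φ w - 1 / (2 * μ) * G := by rw [hc]; ring
  simpa [hφ, hG, hgdef] using key

lemma coco {μ : ℝ} (hμ : 0 < μ) (hconv : ConvexOn ℝ Set.univ f)
    (hdiff : ∀ w, HasFDerivAt f (dotCLM (f' w)) w)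
    (hsmooth : ∀ w v, norm2 (f' w - f' v) ≤ μ * norm2 (w - v))
    (v w : Fin nn → ℝ) :
    μ⁻¹ * ((f' w - f' v) ⬝ᵥ (f' w - f' v)) ≤ (f' w - f' v) ⬝ᵥ (w - v) := by
  have h1 := coco_half f f' hμ hconv hdiff hsmooth v w
  have h2 := coco_half f f' hμ hconv hdiff hsmooth w v
  have hGsym : (f' v - f' w) ⬝ᵥ (f' v - f' w) = (f' w - f' v) ⬝ᵥ (f' w - f' v) := by
    have : f' v - f' w = -(f' w - f' v) := by abel
    rw [this, neg_dotProduct, dotProduct_neg, neg_neg]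
  rw [hGsym] at h2
  have hexp : (f' w - f' v) ⬝ᵥ (w - v)
      = f' w ⬝ᵥ w - f' w ⬝ᵥ v - f' v ⬝ᵥ w + f' v ⬝ᵥ v := by
    rw [sub_dotProduct, dotProduct_sub, dotProduct_sub]; ring
  have hmu : 1 / (2 * μ) + 1 / (2 * μ) = μ⁻¹ := by
    rw [← add_div, inv_eq_one_div]
    rw [div_eq_div_iff (by positivity) hμ.ne']
    ring
  have hcomb : μ⁻¹ * ((f' w - f' v) ⬝ᵥ (f' w - f' v))
      = 1 / (2 * μ) * ((f' w - f' v) ⬝ᵥ (f' w - f' v))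
        + 1 / (2 * μ) * ((f' w - f' v) ⬝ᵥ (f' w - f' v)) := by
    rw [← add_mul, hmu]
  rw [hexp, hcomb]
  linarith [h1, h2]

lemma grad_mem_dom (hconv : ConvexOn ℝ Set.univ f)
    (hdiff : ∀ w, HasFDerivAt f (dotCLM (f' w)) w) (x : Fin nn → ℝ) :
    BddAbove (Set.range fun w => w ⬝ᵥ f' x - f w) := by
  refine ⟨f' x ⬝ᵥ x - f x, ?_⟩
  rintro _ ⟨w, rfl⟩
  have h := grad_ineq f f' hconv hdiff x w
  have hdc : w ⬝ᵥ f' x = f' x ⬝ᵥ w := dotProduct_comm _ _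
  have he : f' x ⬝ᵥ (w - x) = f' x ⬝ᵥ w - f' x ⬝ᵥ x := dotProduct_sub _ _ _
  rw [he] at h
  simp only [Set.mem_setOf_eq]
  linarith [h, hdc.le, hdc.ge]

end Analytic

section Proj
variable {dd : ℕ} {Q : Matrix (Fin dd) (Fin dd) ℝ}

lemma proj_dot_self (hsym : Qᵀ = Q) (hidem : Q * Q = Q) (v : Fin dd → ℝ) :
    (Q.mulVec v) ⬝ᵥ (Q.mulVec v) = v ⬝ᵥ Q.mulVec v := by
  rw [transpose_dot Q (Q.mulVec v) v, hsym, Matrix.mulVec_mulVec, hidem,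
    dotProduct_comm]

lemma proj_dot (hsym : Qᵀ = Q) (hidem : Q * Q = Q) (a b : Fin dd → ℝ) :
    (Q.mulVec a) ⬝ᵥ b = (Q.mulVec a) ⬝ᵥ (Q.mulVec b) := by
  have h1 : (Q.mulVec a) ⬝ᵥ (Q.mulVec b) = Qᵀ.mulVec (Q.mulVec a) ⬝ᵥ b :=
    transpose_dot Q (Q.mulVec a) b
  rw [h1, hsym, Matrix.mulVec_mulVec, hidem]

lemma proj_pythag {P : Matrix (Fin dd) (Fin dd) ℝ} (hsym : Pᵀ = P) (hidem : P * P = P)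
    (v : Fin dd → ℝ) :
    v ⬝ᵥ v = (P.mulVec v) ⬝ᵥ (P.mulVec v) + ((1 - P).mulVec v) ⬝ᵥ ((1 - P).mulVec v) := by
  have hsym' : (1 - P)ᵀ = 1 - P := by
    rw [Matrix.transpose_sub, Matrix.transpose_one, hsym]
  have hidem' : (1 - P) * (1 - P) = 1 - P := by
    rw [Matrix.sub_mul, Matrix.mul_sub, Matrix.mul_sub, hidem]
    simp [Matrix.one_mul, Matrix.mul_one]
  rw [proj_dot_self hsym hidem, proj_dot_self hsym' hidem']
  rw [Matrix.sub_mulVec, Matrix.one_mulVec, dotProduct_sub]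
  ring

lemma norm2_proj_le {P : Matrix (Fin dd) (Fin dd) ℝ} (hsym : Pᵀ = P) (hidem : P * P = P)
    (v : Fin dd → ℝ) : norm2 ((1 - P).mulVec v) ≤ norm2 v := by
  rw [norm2_eq_sqrt_dot, norm2_eq_sqrt_dot]
  apply Real.sqrt_le_sqrt
  have := proj_pythag hsym hidem v
  have h0 := dot_self_nonneg (P.mulVec v)
  linarith

end Proj

section Frob
variable {a b : ℕ}

lemma norm2_mulVec_le (M : Matrix (Fin a) (Fin b) ℝ) (v : Fin b → ℝ) :
    norm2 (M.mulVec v) ≤ Real.sqrt (∑ i, ∑ j, M i j ^ 2) * norm2 v := by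
  rw [norm2, norm2]
  refine le_trans ?_ (Real.sqrt_mul (by positivity : (0:ℝ) ≤ ∑ i, ∑ j, M i j ^ 2) _).le
  apply Real.sqrt_le_sqrt
  rw [Finset.sum_mul]
  apply Finset.sum_le_sum
  intro i _
  have h := sum_mul_sq_le_sq_mul_sq Finset.univ (fun j => M i j) v
  calc M.mulVec v i ^ 2 = (∑ j, M i j * v j) ^ 2 := by rfl
    _ ≤ (∑ j, M i j ^ 2) * ∑ j, v j ^ 2 := h

end Frob

section ZfSec
variable {kk qq : ℕ} (f : (Fin kk → ℝ) → ℝ) (B : Matrix (Fin kk) (Fin qq) ℝ)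
  (Pperp : Matrix (Fin qq) (Fin qq) ℝ) (zs : Fin kk → ℝ)

lemma Zf_elem_eq (hsym : Pperpᵀ = Pperp) (hidem : Pperp * Pperp = Pperp) (Δ : Fin kk → ℝ) :
    Real.sqrt (Δ ⬝ᵥ (B * Pperp * Bᵀ).mulVec Δ) = norm2 (Pperp.mulVec (Bᵀ.mulVec Δ)) := by
  have h1 : (B * Pperp * Bᵀ).mulVec Δ = B.mulVec (Pperp.mulVec (Bᵀ.mulVec Δ)) := by
    rw [Matrix.mulVec_mulVec, Matrix.mulVec_mulVec]
  rw [h1, transpose_dot B Δ (Pperp.mulVec (Bᵀ.mulVec Δ)),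
    ← proj_dot_self hsym hidem (Bᵀ.mulVec Δ), norm2_eq_sqrt_dot]

lemma Zf_bddAbove (hsym : Pperpᵀ = Pperp) (hidem : Pperp * Pperp = Pperp) :
    BddAbove {r | ∃ Δ : Fin kk → ℝ, Δ ≠ 0 ∧ zs + Δ ∈ fenchelDom f ∧
      r = Real.sqrt (Δ ⬝ᵥ (B * Pperp * Bᵀ).mulVec Δ) / norm2 Δ} := by
  refine ⟨Real.sqrt (∑ i, ∑ j, (Pperp * Bᵀ) i j ^ 2), ?_⟩
  rintro r ⟨Δ, hΔ, _, rfl⟩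
  rw [Zf_elem_eq B Pperp hsym hidem Δ]
  rw [div_le_iff₀ (norm2_pos hΔ)]
  have h2 : Pperp.mulVec (Bᵀ.mulVec Δ) = (Pperp * Bᵀ).mulVec Δ := Matrix.mulVec_mulVec _ _ _
  rw [h2]
  exact norm2_mulVec_le (Pperp * Bᵀ) Δ

lemma norm2_le_Zf (hsym : Pperpᵀ = Pperp) (hidem : Pperp * Pperp = Pperp)
    {Δ : Fin kk → ℝ} (hΔ : Δ ≠ 0) (hdom : zs + Δ ∈ fenchelDom f) :
    norm2 (Pperp.mulVec (Bᵀ.mulVec Δ)) ≤ Zf f B Pperp zs * norm2 Δ := by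
  have hmem : Real.sqrt (Δ ⬝ᵥ (B * Pperp * Bᵀ).mulVec Δ) / norm2 Δ
      ∈ {r | ∃ Δ : Fin kk → ℝ, Δ ≠ 0 ∧ zs + Δ ∈ fenchelDom f ∧
      r = Real.sqrt (Δ ⬝ᵥ (B * Pperp * Bᵀ).mulVec Δ) / norm2 Δ} := ⟨Δ, hΔ, hdom, rfl⟩
  have hle := le_csSup (Zf_bddAbove f B Pperp zs hsym hidem) hmem
  rw [Zf_elem_eq B Pperp hsym hidem Δ, div_le_iff₀ (norm2_pos hΔ)] at hle
  exact hle

end ZfSec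

lemma quad_bound (μ lam Z a E p2 qn : ℝ) (hμ : 0 < μ) (hlam : 0 < lam)
    (hZc : 2 * μ * Z ^ 2 ≤ lam) (hE : 0 ≤ E) (hqn : 0 ≤ qn) (hqZ : qn ≤ Z * a)
    (H1 : a ^ 2 + μ * lam * p2 ≤ μ * (Z * a * E)) :
    p2 + lam⁻¹ * lam⁻¹ * qn ^ 2 ≤ μ * Z ^ 2 / (2 * lam) * E ^ 2 := by
  have hq2 : qn ^ 2 ≤ (Z * a) ^ 2 := by nlinarith
  have core2 : μ * (lam ^ 2 * p2 + qn ^ 2) ≤ μ * (lam * μ * Z ^ 2 * E ^ 2 / 2) := by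
    nlinarith [mul_le_mul_of_nonneg_left H1 hlam.le,
      mul_nonneg hlam.le (sq_nonneg (a - μ * Z * E)),
      mul_le_mul_of_nonneg_left hZc (sq_nonneg a),
      mul_le_mul_of_nonneg_left hq2 hμ.le]
  have core : lam ^ 2 * p2 + qn ^ 2 ≤ lam * μ * Z ^ 2 * E ^ 2 / 2 :=
    (mul_le_mul_iff_right₀ hμ).1 core2
  have h2 : lam ^ 2 * (p2 + lam⁻¹ * lam⁻¹ * qn ^ 2) = lam ^ 2 * p2 + qn ^ 2 := by
    field_simp
  have h3 : lam ^ 2 * (μ * Z ^ 2 / (2 * lam) * E ^ 2) = lam * μ * Z ^ 2 * E ^ 2 / 2 := by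
    field_simp
  exact (mul_le_mul_iff_right₀ (pow_pos hlam 2)).1 (by rw [h2, h3]; exact core)


end Helpers


/-- iterative adaptive sketching, deterministic bound: starting from
`x̃⁽⁰⁾ = 0` and iterating `x̃⁽ᵗ⁾ = -λ⁻¹ Aᵀ ∇f(A S α⁽ᵗ⁾ + A x̃⁽ᵗ⁻¹⁾)` where `α⁽ᵗ⁾`
minimizes `α ↦ f(A S α + A x̃⁽ᵗ⁻¹⁾) + (λ/2)‖S α + x̃⁽ᵗ⁻¹⁾‖₂²`, if `λ ≥ 2 μ Z_f²` then
after `T` iterations `‖x̃⁽ᵀ⁾ - x*‖₂ ≤ (μ Z_f²/(2λ))^{T/2} ‖x*‖₂`. -/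
theorem statement_7 {n d m : ℕ} (f : (Fin n → ℝ) → ℝ) (f' : (Fin n → ℝ) → Fin n → ℝ)
    (A : Matrix (Fin n) (Fin d) ℝ) (μ lam : ℝ)
    (hμ : 0 < μ) (hlam : 0 < lam)
    (hconv : ConvexOn ℝ Set.univ f)
    (hdiff : ∀ w, HasFDerivAt f (dotCLM (f' w)) w)
    (hsmooth : ∀ w v, norm2 (f' w - f' v) ≤ μ * norm2 (w - v))
    (S : Matrix (Fin d) (Fin m) ℝ) (P : Matrix (Fin d) (Fin d) ℝ)
    (hP : IsOrthProj S P)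
    (xs : Fin d → ℝ)
    (hxs : ∀ x, f (A.mulVec xs) + lam / 2 * norm2 xs ^ 2
        ≤ f (A.mulVec x) + lam / 2 * norm2 x ^ 2)
    (hZ : 2 * μ * Zf f A (1 - P) (f' (A.mulVec xs)) ^ 2 ≤ lam)
    (xt : ℕ → Fin d → ℝ) (α : ℕ → Fin m → ℝ)
    (hx0 : xt 0 = 0)
    (hmin : ∀ t, ∀ a : Fin m → ℝ,
      f ((A * S).mulVec (α (t + 1)) + A.mulVec (xt t))
          + lam / 2 * norm2 (S.mulVec (α (t + 1)) + xt t) ^ 2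
        ≤ f ((A * S).mulVec a + A.mulVec (xt t))
          + lam / 2 * norm2 (S.mulVec a + xt t) ^ 2)
    (hstep : ∀ t, xt (t + 1)
      = -(lam⁻¹ • Aᵀ.mulVec (f' ((A * S).mulVec (α (t + 1)) + A.mulVec (xt t)))))
    (T : ℕ) :
    norm2 (xt T - xs)
      ≤ (μ * Zf f A (1 - P) (f' (A.mulVec xs)) ^ 2 / (2 * lam)) ^ ((T : ℝ) / 2)
        * norm2 xs := by
  obtain ⟨hPsym, hPidem, hPS, C, hPC⟩ := hP
  set zs := f' (A.mulVec xs) with hzs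
  set Z := Zf f A (1 - P) zs with hZdef
  set rr := μ * Z ^ 2 / (2 * lam) with hrr
  have hrr0 : (0:ℝ) ≤ rr := by rw [hrr]; positivity
  have hQsym : (1 - P)ᵀ = 1 - P := by rw [Matrix.transpose_sub, Matrix.transpose_one, hPsym]
  have hQidem : (1 - P) * (1 - P) = 1 - P := by
    rw [Matrix.sub_mul, Matrix.mul_sub, Matrix.mul_sub, hPidem]
    simp [Matrix.one_mul, Matrix.mul_one]
  have hQS : (1 - P) * S = 0 := by rw [Matrix.sub_mul, hPS, Matrix.one_mul, sub_self]
  have hPkill : ∀ w : Fin d → ℝ, Sᵀ.mulVec w = 0 → P.mulVec w = 0 := by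
    intro w hw
    apply dot_self_eq_zero
    rw [proj_dot_self hPsym hPidem w, hPC, ← Matrix.mulVec_mulVec,
      transpose_dot S w (C.mulVec w), hw, zero_dotProduct]
  -- first-order optimality of xs
  have hxsopt : Aᵀ.mulVec zs + lam • xs = 0 := by
    have hm : ∀ x : Fin d → ℝ,
        f (A.mulVec xs + 0) + lam / 2 *
          (((1 : Matrix (Fin d) (Fin d) ℝ).mulVec xs + 0) ⬝ᵥ
            ((1 : Matrix (Fin d) (Fin d) ℝ).mulVec xs + 0))
        ≤ f (A.mulVec x + 0) + lam / 2 *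
          (((1 : Matrix (Fin d) (Fin d) ℝ).mulVec x + 0) ⬝ᵥ
            ((1 : Matrix (Fin d) (Fin d) ℝ).mulVec x + 0)) := by
      intro x
      simpa [Matrix.one_mulVec, ← norm2_sq] using hxs x
    have h := first_order f f' hdiff lam A (1 : Matrix (Fin d) (Fin d) ℝ) 0 0 xs hm
    have h2 : Aᵀ.mulVec (f' (A.mulVec xs)) + lam • xs = 0 := by
      simpa [Matrix.one_mulVec, Matrix.transpose_one] using h
    exact h2
  have hxs_eq : xs = -(lam⁻¹ • Aᵀ.mulVec zs) := by
    have h1 : lam • xs = -(Aᵀ.mulVec zs) := by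
      rw [add_comm] at hxsopt
      exact eq_neg_of_add_eq_zero_left hxsopt
    calc xs = lam⁻¹ • (lam • xs) := by rw [smul_smul, inv_mul_cancel₀ hlam.ne', one_smul]
      _ = -(lam⁻¹ • Aᵀ.mulVec zs) := by rw [h1, smul_neg]
  -- one-step contraction
  have hkey : ∀ t, norm2 (xt (t + 1) - xs) ≤ Real.sqrt rr * norm2 (xt t - xs) := by
    intro t
    set y : Fin d → ℝ := S.mulVec (α (t + 1)) + xt t with hy
    set z1 := f' (A.mulVec y) with hz1
    set Δ := z1 - zs with hΔdef
    set e := xt t - xs with he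
    set u := y - xs with hu
    have hargs : (A * S).mulVec (α (t + 1)) + A.mulVec (xt t) = A.mulVec y := by
      rw [hy, Matrix.mulVec_add, Matrix.mulVec_mulVec]
    have hm : ∀ a : Fin m → ℝ,
        f ((A * S).mulVec (α (t + 1)) + A.mulVec (xt t)) + lam / 2 *
          ((S.mulVec (α (t + 1)) + xt t) ⬝ᵥ (S.mulVec (α (t + 1)) + xt t))
        ≤ f ((A * S).mulVec a + A.mulVec (xt t)) + lam / 2 *
          ((S.mulVec a + xt t) ⬝ᵥ (S.mulVec a + xt t)) := by
      intro a
      have h := hmin t a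
      rw [norm2_sq, norm2_sq] at h
      exact h
    have hαopt := first_order f f' hdiff lam (A * S) S (A.mulVec (xt t)) (xt t) (α (t + 1)) hm
    rw [hargs, ← hy, Matrix.transpose_mul, ← Matrix.mulVec_mulVec] at hαopt
    have hS0 : Sᵀ.mulVec (Aᵀ.mulVec z1 + lam • y) = 0 := by
      rw [Matrix.mulVec_add, Matrix.mulVec_smul]
      exact hαopt
    have hP0 : P.mulVec (Aᵀ.mulVec z1 + lam • y) = 0 := hPkill _ hS0
    have hAD : Aᵀ.mulVec Δ = (Aᵀ.mulVec z1 + lam • y) - lam • u := by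
      have hA2 : Aᵀ.mulVec zs = -(lam • xs) := eq_neg_of_add_eq_zero_left hxsopt
      rw [hΔdef, Matrix.mulVec_sub, hA2, hu, smul_sub]
      abel
    have hPAD : P.mulVec (Aᵀ.mulVec Δ) = -(lam • P.mulVec u) := by
      rw [hAD, Matrix.mulVec_sub, hP0, Matrix.mulVec_smul, zero_sub]
    have hQu : (1 - P).mulVec u = (1 - P).mulVec e := by
      have h1 : u = S.mulVec (α (t + 1)) + e := by rw [hu, hy, he]; abel
      rw [h1, Matrix.mulVec_add, Matrix.mulVec_mulVec, hQS, Matrix.zero_mulVec, zero_add]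
    have hco : μ⁻¹ * (Δ ⬝ᵥ Δ) ≤ Δ ⬝ᵥ (A.mulVec y - A.mulVec xs) :=
      coco f f' hμ hconv hdiff hsmooth (A.mulVec xs) (A.mulVec y)
    have hAu : A.mulVec y - A.mulVec xs = A.mulVec u := by rw [hu, Matrix.mulVec_sub]
    rw [hAu, transpose_dot A Δ u] at hco
    have hsplit : Aᵀ.mulVec Δ ⬝ᵥ u
        = (P.mulVec (Aᵀ.mulVec Δ)) ⬝ᵥ u + ((1 - P).mulVec (Aᵀ.mulVec Δ)) ⬝ᵥ u := by
      rw [← add_dotProduct, ← Matrix.add_mulVec]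
      have : P + (1 - P) = 1 := by abel
      rw [this, Matrix.one_mulVec]
    have hterm1 : (P.mulVec (Aᵀ.mulVec Δ)) ⬝ᵥ u = -(lam * ((P.mulVec u) ⬝ᵥ (P.mulVec u))) := by
      rw [hPAD, neg_dotProduct, smul_dotProduct, proj_dot hPsym hPidem u u]
      simp
    have hterm2 : ((1 - P).mulVec (Aᵀ.mulVec Δ)) ⬝ᵥ u
        ≤ norm2 ((1 - P).mulVec (Aᵀ.mulVec Δ)) * norm2 e := by
      have h1 : ((1 - P).mulVec (Aᵀ.mulVec Δ)) ⬝ᵥ u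
          = ((1 - P).mulVec (Aᵀ.mulVec Δ)) ⬝ᵥ ((1 - P).mulVec e) := by
        rw [proj_dot hQsym hQidem (Aᵀ.mulVec Δ) u, hQu]
      rw [h1]
      exact (cauchy_dot _ _).trans
        (mul_le_mul_of_nonneg_left (norm2_proj_le hPsym hPidem e) (norm2_nonneg _))
    set qn := norm2 ((1 - P).mulVec (Aᵀ.mulVec Δ)) with hqn
    set a := norm2 Δ with ha
    set E := norm2 e with hEdef
    have hqZ : qn ≤ Z * a := by
      by_cases hΔ0 : Δ = 0
      · have h0 : qn = 0 := by simp [hqn, hΔ0, Matrix.mulVec_zero, norm2]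
        have h0' : a = 0 := by simp [ha, hΔ0, norm2]
        rw [h0, h0', mul_zero]
      · have hdom : zs + Δ ∈ fenchelDom f := by
          have hzd : zs + Δ = z1 := by rw [hΔdef]; abel
          rw [hzd, hz1]
          exact grad_mem_dom f f' hconv hdiff (A.mulVec y)
        exact norm2_le_Zf f A (1 - P) zs hQsym hQidem hΔ0 hdom
    have hH1 : a ^ 2 + μ * lam * ((P.mulVec u) ⬝ᵥ (P.mulVec u)) ≤ μ * (Z * a * E) := by
      have hdd : Δ ⬝ᵥ Δ = a ^ 2 := (norm2_sq Δ).symm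
      have hchain : μ⁻¹ * (Δ ⬝ᵥ Δ)
          ≤ -(lam * ((P.mulVec u) ⬝ᵥ (P.mulVec u))) + qn * E := by
        rw [hsplit, hterm1] at hco
        linarith [hco, hterm2]
      have hmul := mul_le_mul_of_nonneg_left hchain hμ.le
      rw [← mul_assoc, mul_inv_cancel₀ hμ.ne', one_mul, hdd] at hmul
      have hqE : qn * E ≤ Z * a * E := mul_le_mul_of_nonneg_right hqZ (norm2_nonneg e)
      nlinarith [hmul, mul_le_mul_of_nonneg_left hqE hμ.le]
    have hstep_eq : xt (t + 1) - xs = -(lam⁻¹ • Aᵀ.mulVec Δ) := by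
      rw [hstep t, hargs, hxs_eq, hΔdef, Matrix.mulVec_sub, smul_sub]
      abel
    have hN : norm2 (xt (t + 1) - xs) ^ 2
        = ((P.mulVec u) ⬝ᵥ (P.mulVec u)) + lam⁻¹ * lam⁻¹ * qn ^ 2 := by
      rw [hstep_eq, norm2_sq, neg_dotProduct, dotProduct_neg, neg_neg,
        smul_dotProduct, dotProduct_smul, smul_eq_mul, smul_eq_mul, ← mul_assoc]
      have hpyth := proj_pythag hPsym hPidem (Aᵀ.mulVec Δ)
      have hqn2 : ((1 - P).mulVec (Aᵀ.mulVec Δ)) ⬝ᵥ ((1 - P).mulVec (Aᵀ.mulVec Δ)) = qn ^ 2 :=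
        (norm2_sq _).symm
      rw [hpyth, hqn2, hPAD, neg_dotProduct, dotProduct_neg, neg_neg,
        smul_dotProduct, dotProduct_smul, smul_eq_mul, smul_eq_mul]
      field_simp
    have hquad := quad_bound μ lam Z a E ((P.mulVec u) ⬝ᵥ (P.mulVec u)) qn hμ hlam hZ
      (norm2_nonneg e) (norm2_nonneg _) hqZ hH1
    rw [← hN] at hquad
    have h1 : norm2 (xt (t + 1) - xs) = Real.sqrt (norm2 (xt (t + 1) - xs) ^ 2) :=
      (Real.sqrt_sq (norm2_nonneg _)).symm
    rw [h1]
    calc Real.sqrt (norm2 (xt (t + 1) - xs) ^ 2) ≤ Real.sqrt (rr * E ^ 2) := by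
          apply Real.sqrt_le_sqrt
          rw [hrr]
          exact hquad
      _ = Real.sqrt rr * E := by
          rw [Real.sqrt_mul hrr0, Real.sqrt_sq (norm2_nonneg e)]
  -- induction
  have hs0 : 0 ≤ Real.sqrt rr := Real.sqrt_nonneg _
  have main : ∀ t, norm2 (xt t - xs) ≤ (Real.sqrt rr) ^ t * norm2 xs := by
    intro t
    induction t with
    | zero =>
      rw [hx0, pow_zero, one_mul, zero_sub, norm2_neg]
    | succ t ih =>
      calc norm2 (xt (t + 1) - xs) ≤ Real.sqrt rr * norm2 (xt t - xs) := hkey t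
        _ ≤ Real.sqrt rr * ((Real.sqrt rr) ^ t * norm2 xs) :=
            mul_le_mul_of_nonneg_left ih hs0
        _ = (Real.sqrt rr) ^ (t + 1) * norm2 xs := by ring
  have hrpow : rr ^ ((T : ℝ) / 2) = (Real.sqrt rr) ^ T := by
    rw [show ((T : ℝ) / 2) = (1 / 2 : ℝ) * T by ring, Real.rpow_mul hrr0,
      Real.rpow_natCast]
    congr 1
    rw [Real.sqrt_eq_rpow]
  rw [hrpow]
  exact main T

end Sketch
end
end

section
/- Effective-rank lower bound under polynomial spectral decay: for any β > 1/2, any integer ρ ≥ 1, and any λ > 0 with λ ≥ ρ^{−2β}, one has Σ_{i=0}^{ρ} 1/(1 + λ·i^{2β}) ≥ −1 + (λ^{−1/(2β)}/(2β)) · ∫₀¹ u^{1/(2β)−1}/(1+u) du, where the integral is finite and independent of λ. -/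
open Matrix Finset Real Set

noncomputable section

namespace Sketch

/-- effective-rank lower bound, polynomial decay: for any `β > 1/2`,
integer `ρ ≥ 1` and `λ > 0` with `λ ≥ ρ^{-2β}`, the integral
`∫₀¹ u^{1/(2β)-1}/(1+u) du` is finite, and
`∑_{i=0}^ρ 1/(1 + λ i^{2β}) ≥ -1 + (λ^{-1/(2β)}/(2β)) ∫₀¹ u^{1/(2β)-1}/(1+u) du`. -/
theorem statement_15 (β lam : ℝ) (ρ : ℕ) (hβ : 1 / 2 < β) (hρ : 1 ≤ ρ) (hlam : 0 < lam)
    (hlam' : (ρ : ℝ) ^ (-(2 * β)) ≤ lam) :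
    IntervalIntegrable (fun u : ℝ => u ^ (1 / (2 * β) - 1) / (1 + u))
      MeasureTheory.volume 0 1 ∧
    -1 + lam ^ (-(1 / (2 * β))) / (2 * β)
        * ∫ u in (0 : ℝ)..1, u ^ (1 / (2 * β) - 1) / (1 + u)
      ≤ ∑ i ∈ Finset.range (ρ + 1), 1 / (1 + lam * (i : ℝ) ^ (2 * β)) := by
  have hb : (0:ℝ) < 2 * β := by linarith
  set α : ℝ := 1 / (2 * β) with hα
  have hα0 : 0 < α := by positivity
  have hα1 : α < 1 := by rw [hα, div_lt_one hb]; linarith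
  have hαβ : α * (2 * β) = 1 := by rw [hα]; exact one_div_mul_cancel hb.ne'
  -- Part 1: integrability
  have hcontinv : ContinuousOn (fun u : ℝ => (1 + u)⁻¹) (Set.uIcc (0:ℝ) 1) := by
    apply ContinuousOn.inv₀ (by fun_prop)
    intro u hu
    rw [Set.uIcc_of_le (by norm_num : (0:ℝ) ≤ 1)] at hu
    have h1 : (0:ℝ) < 1 + u := by linarith [hu.1]
    exact ne_of_gt h1
  have hint : IntervalIntegrable (fun u : ℝ => u ^ (α - 1) / (1 + u))
      MeasureTheory.volume 0 1 := by
    have h1 : IntervalIntegrable (fun u : ℝ => u ^ (α - 1)) MeasureTheory.volume 0 1 :=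
      intervalIntegral.intervalIntegrable_rpow' (by linarith)
    simpa [div_eq_mul_inv] using h1.mul_continuousOn hcontinv
  refine ⟨hint, ?_⟩
  -- setup
  set g : ℝ → ℝ := fun x => 1 / (1 + lam * x ^ (2 * β)) with hg
  have hgpos : ∀ x : ℝ, 0 ≤ x → 0 < 1 + lam * x ^ (2 * β) := by
    intro x hx
    have := Real.rpow_nonneg hx (2 * β)
    nlinarith
  have hg_cont : ContinuousOn g (Set.Ici (0:ℝ)) := by
    apply ContinuousOn.div continuousOn_const
    · exact continuousOn_const.add (continuousOn_const.mul
        (continuousOn_id.rpow_const fun x _ => Or.inr hb.le))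
    · exact fun x hx => ne_of_gt (hgpos x hx)
  have hg_nonneg : ∀ x : ℝ, 0 ≤ x → 0 ≤ g x := fun x hx =>
    le_of_lt (by simpa [hg] using div_pos one_pos (hgpos x hx))
  set L : ℝ := lam ^ (-α) with hL
  have hL0 : 0 ≤ L := Real.rpow_nonneg hlam.le _
  set c : ℝ := L * α with hc
  set φ : ℝ → ℝ := fun u => L * u ^ α with hφ
  have hφ_nonneg : ∀ u : ℝ, 0 ≤ u → 0 ≤ φ u := fun u hu =>
    mul_nonneg hL0 (Real.rpow_nonneg hu _)
  have hφ_cont : ContinuousOn φ (Set.uIcc (0:ℝ) 1) :=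
    continuousOn_const.mul (continuousOn_id.rpow_const fun x _ => Or.inr hα0.le)
  -- key identity: lam * (φ u) ^ (2β) = u for u ≥ 0
  have hkey : ∀ u : ℝ, 0 ≤ u → lam * (φ u) ^ (2 * β) = u := by
    intro u hu
    have h1 : (φ u) ^ (2 * β) = L ^ (2 * β) * (u ^ α) ^ (2 * β) :=
      Real.mul_rpow hL0 (Real.rpow_nonneg hu _)
    have h2 : (u ^ α) ^ (2 * β) = u := by
      rw [← Real.rpow_mul hu, hαβ, Real.rpow_one]
    have h3 : L ^ (2 * β) = lam⁻¹ := by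
      rw [hL, ← Real.rpow_mul hlam.le]
      have h4 : -α * (2 * β) = -(α * (2 * β)) := by ring
      rw [h4, hαβ, Real.rpow_neg_one]
    rw [h1, h2, h3]
    field_simp
  -- change of variables
  have hchg : (∫ u in (0:ℝ)..1, c * (u ^ (α - 1) / (1 + u))) = ∫ x in (0:ℝ)..L, g x := by
    have hmin : min (0:ℝ) 1 = 0 := by norm_num
    have hmax : max (0:ℝ) 1 = 1 := by norm_num
    have hff' : ∀ x ∈ Set.Ioo (min (0:ℝ) 1) (max (0:ℝ) 1),
        HasDerivWithinAt φ (c * x ^ (α - 1)) (Set.Ioi x) x := by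
      intro x hx
      rw [hmin, hmax] at hx
      have hd : HasDerivAt (fun u : ℝ => u ^ α) (α * x ^ (α - 1)) x :=
        Real.hasDerivAt_rpow_const (Or.inl (ne_of_gt hx.1))
      have := (hd.const_mul L).hasDerivWithinAt (s := Set.Ioi x)
      have h' : c * x ^ (α - 1) = L * (α * x ^ (α - 1)) := by rw [hc]; ring
      rw [h']; exact this
    have hIoo : ∀ x ∈ Set.Ioo (min (0:ℝ) 1) (max (0:ℝ) 1), 0 ≤ φ x := by
      intro x hx; rw [hmin, hmax] at hx; exact hφ_nonneg x hx.1.le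
    have himg : φ '' Set.uIcc (0:ℝ) 1 ⊆ Set.Ici 0 := by
      rintro - ⟨x, hx, rfl⟩
      rw [Set.uIcc_of_le (by norm_num : (0:ℝ) ≤ 1)] at hx
      exact hφ_nonneg x hx.1
    have hg1 : MeasureTheory.IntegrableOn g (φ '' Set.uIcc (0:ℝ) 1) := by
      exact ContinuousOn.integrableOn_compact
        (isCompact_uIcc.image_of_continuousOn hφ_cont) (hg_cont.mono himg)
    have hgφ_cont : ContinuousOn (g ∘ φ) (Set.uIcc (0:ℝ) 1) :=
      hg_cont.comp hφ_cont fun x hx => himg ⟨x, hx, rfl⟩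
    have hg2 : MeasureTheory.IntegrableOn (fun x => (c * x ^ (α - 1)) • (g ∘ φ) x)
        (Set.uIcc (0:ℝ) 1) := by
      rw [← intervalIntegrable_iff']
      have h1 : IntervalIntegrable (fun u : ℝ => c * u ^ (α - 1)) MeasureTheory.volume 0 1 :=
        (intervalIntegral.intervalIntegrable_rpow' (by linarith)).const_mul c
      simpa [smul_eq_mul] using h1.mul_continuousOn hgφ_cont
    have hgIoo : ContinuousOn g (φ '' Set.Ioo (min (0:ℝ) 1) (max (0:ℝ) 1)) := by
      apply hg_cont.mono
      rintro - ⟨x, hx, rfl⟩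
      exact hIoo x hx
    have hsub := intervalIntegral.integral_comp_smul_deriv''' hφ_cont hff' hgIoo hg1 hg2
    have hφ0 : φ 0 = 0 := by
      simp [hφ, Real.zero_rpow (ne_of_gt hα0)]
    have hφ1 : φ 1 = L := by simp [hφ]
    rw [hφ0, hφ1] at hsub
    rw [← hsub]
    apply intervalIntegral.integral_congr
    intro x hx
    rw [Set.uIcc_of_le (by norm_num : (0:ℝ) ≤ 1)] at hx
    rcases eq_or_lt_of_le hx.1 with h0 | h0
    · rw [← h0]
      simp [Real.zero_rpow (show α - 1 ≠ 0 by linarith)]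
    · have : g (φ x) = 1 / (1 + x) := by
        rw [hg]; simp only []
        rw [hkey x h0.le]
      simp only [smul_eq_mul, Function.comp_apply, this]
      ring
  -- L ≤ ρ
  have hρ0 : (0:ℝ) < (ρ:ℝ) := by exact_mod_cast Nat.lt_of_lt_of_le Nat.zero_lt_one hρ
  have hLρ : L ≤ (ρ:ℝ) := by
    have h1 : lam ^ (-α) ≤ ((ρ:ℝ) ^ (-(2 * β))) ^ (-α) :=
      Real.rpow_le_rpow_of_nonpos (Real.rpow_pos_of_pos hρ0 _) hlam' (by linarith)
    have h2 : ((ρ:ℝ) ^ (-(2 * β))) ^ (-α) = (ρ:ℝ) := by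
      rw [← Real.rpow_mul hρ0.le]
      have h3 : -(2 * β) * -α = α * (2 * β) := by ring
      rw [h3, hαβ, Real.rpow_one]
    rw [hL]; rw [h2] at h1; exact h1
  -- integral over [0, L] ≤ integral over [0, ρ]
  have hgint : IntervalIntegrable g MeasureTheory.volume 0 (ρ:ℝ) := by
    apply ContinuousOn.intervalIntegrable
    apply hg_cont.mono
    rw [Set.uIcc_of_le hρ0.le]
    exact fun x hx => hx.1
  have hmono : (∫ x in (0:ℝ)..L, g x) ≤ ∫ x in (0:ℝ)..(ρ:ℝ), g x := by
    apply intervalIntegral.integral_mono_interval le_rfl hL0 hLρ _ hgint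
    filter_upwards [MeasureTheory.ae_restrict_mem measurableSet_Ioc] with x hx
    exact hg_nonneg x hx.1.le
  -- integral ≤ sum
  have hanti : AntitoneOn g (Set.Icc (0:ℝ) (0 + (ρ:ℝ))) := by
    intro x hx y hy hxy
    have hx0 : 0 ≤ x := hx.1
    have h1 : x ^ (2 * β) ≤ y ^ (2 * β) := Real.rpow_le_rpow hx0 hxy hb.le
    exact one_div_le_one_div_of_le (hgpos x hx0) (by nlinarith)
  have hsum : (∫ x in (0:ℝ)..(0 + (ρ:ℝ)), g x) ≤ ∑ i ∈ Finset.range ρ, g (0 + (i:ℝ)) := by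
    exact_mod_cast hanti.integral_le_sum
  rw [zero_add] at hsum
  simp only [zero_add] at hsum
  have hsum2 : (∑ i ∈ Finset.range ρ, g (i:ℝ)) ≤ ∑ i ∈ Finset.range (ρ + 1), g (i:ℝ) :=
    Finset.sum_le_sum_of_subset_of_nonneg (Finset.range_subset_range.mpr (Nat.le_succ ρ))
      (fun i _ _ => hg_nonneg _ (Nat.cast_nonneg i))
  -- combine
  have hfinal : c * (∫ u in (0:ℝ)..1, u ^ (α - 1) / (1 + u))
      ≤ ∑ i ∈ Finset.range (ρ + 1), g (i:ℝ) := by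
    rw [← intervalIntegral.integral_const_mul, hchg]
    exact hmono.trans (hsum.trans hsum2)
  have hcc : lam ^ (-α) / (2 * β) = c := by
    rw [hc, hL, hα]; ring
  calc -1 + lam ^ (-α) / (2 * β) * ∫ u in (0:ℝ)..1, u ^ (α - 1) / (1 + u)
      ≤ lam ^ (-α) / (2 * β) * ∫ u in (0:ℝ)..1, u ^ (α - 1) / (1 + u) := by linarith
    _ ≤ ∑ i ∈ Finset.range (ρ + 1), g (i:ℝ) := by rw [hcc]; exact hfinal
    _ = ∑ i ∈ Finset.range (ρ + 1), 1 / (1 + lam * (i:ℝ) ^ (2 * β)) := rfl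


end Sketch
end
end
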